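/- Let λ, λ' > 1 and a ≥ 1 be real numbers. If λ' ≤ λ^a, then (λ')^(1/2) + (λ')^(-1/2) ≤ (λ^(1/2) + λ^(-1/2))^a. -/

import Mathlib

private lemma aux_mono {u v : ℝ} (hu : 1 ≤ u) (huv : u ≤ v) :
    u + u⁻¹ ≤ v + v⁻¹ := by
  have hu0 : 0 < u := by linarith
  have hv0 : 0 < v := by linarith
  have key : v + v⁻¹ - (u + u⁻¹) = (v - u) * (1 - (u * v)⁻¹) := by
    field_simp; ring
  have h1 : (u * v)⁻¹ ≤ 1 := by
    rw [inv_le_one_iff₀]; right; nlinarith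
  nlinarith [key]

/-- If `λ, λ' > 1`, `a ≥ 1` and `λ' ≤ λ^a`, then
`(λ')^(1/2) + (λ')^(-1/2) ≤ (λ^(1/2) + λ^(-1/2))^a`. -/
theorem trace_le_of_multiplier_le (lam lam' a : ℝ)
    (hlam : 1 < lam) (hlam' : 1 < lam') (ha : 1 ≤ a)
    (h : lam' ≤ lam ^ a) :
    lam' ^ ((1:ℝ)/2) + lam' ^ (-(1:ℝ)/2) ≤
      (lam ^ ((1:ℝ)/2) + lam ^ (-(1:ℝ)/2)) ^ a := by
  have hl0 : (0:ℝ) < lam := by linarith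
  have hl'0 : (0:ℝ) < lam' := by linarith
  set t : ℝ := lam ^ ((1:ℝ)/2) with ht
  have ht1 : 1 < t := Real.one_lt_rpow_iff_of_pos hl0 |>.mpr (Or.inl ⟨hlam, by norm_num⟩)
  have ht0 : 0 < t := by linarith
  set u : ℝ := lam' ^ ((1:ℝ)/2) with hu
  have hu1 : 1 < u := Real.one_lt_rpow_iff_of_pos hl'0 |>.mpr (Or.inl ⟨hlam', by norm_num⟩)
  -- v := t ^ a
  set v : ℝ := t ^ a with hv
  have hv0 : 0 < v := Real.rpow_pos_of_pos ht0 a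
  -- rewrite negative exponents as inverses
  have e1 : lam' ^ (-(1:ℝ)/2) = u⁻¹ := by
    rw [show (-(1:ℝ)/2) = -((1:ℝ)/2) by ring, Real.rpow_neg hl'0.le, hu]
  have e2 : lam ^ (-(1:ℝ)/2) = t⁻¹ := by
    rw [show (-(1:ℝ)/2) = -((1:ℝ)/2) by ring, Real.rpow_neg hl0.le, ht]
  -- u ≤ v
  have huv : u ≤ v := by
    have : lam' ^ ((1:ℝ)/2) ≤ (lam ^ a) ^ ((1:ℝ)/2) :=
      Real.rpow_le_rpow hl'0.le h (by norm_num)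
    calc u ≤ (lam ^ a) ^ ((1:ℝ)/2) := this
      _ = lam ^ (a * (1/2)) := (Real.rpow_mul hl0.le a (1/2)).symm
      _ = (lam ^ ((1:ℝ)/2)) ^ a := by
          rw [← Real.rpow_mul hl0.le]; ring_nf
      _ = v := rfl
  have step1 : lam' ^ ((1:ℝ)/2) + lam' ^ (-(1:ℝ)/2) ≤ v + v⁻¹ := by
    rw [e1]; exact aux_mono hu1.le huv
  -- second step : v + v⁻¹ ≤ (t + t⁻¹) ^ a
  have hs0 : (0:ℝ) ≤ t⁻¹ * t⁻¹ := by positivity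
  have factor : t + t⁻¹ = t * (1 + t⁻¹ * t⁻¹) := by field_simp
  have bern : 1 + a * (t⁻¹ * t⁻¹) ≤ (1 + t⁻¹ * t⁻¹) ^ a :=
    one_add_mul_self_le_rpow_one_add (by linarith) ha
  have expand : (t + t⁻¹) ^ a = v * (1 + t⁻¹ * t⁻¹) ^ a := by
    rw [factor, Real.mul_rpow ht0.le (by linarith)]
  have hvinv : v⁻¹ = t ^ (-a) := by rw [hv, ← Real.rpow_neg ht0.le, Real.rpow_neg ht0.le]
  have hle : t ^ (-a) ≤ t ^ (a - 2) :=
    Real.rpow_le_rpow_left_iff ht1 |>.mpr (by linarith)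
  have hta2 : v * (t⁻¹ * t⁻¹) = t ^ (a - 2) := by
    rw [hv, show t⁻¹ * t⁻¹ = t ^ ((-2:ℝ)) by
      rw [Real.rpow_neg ht0.le, show ((2:ℝ)) = ((2:ℕ):ℝ) by norm_num, Real.rpow_natCast]
      rw [pow_two, mul_inv],
      ← Real.rpow_add ht0]
    ring_nf
  have h2 : v⁻¹ ≤ a * (v * (t⁻¹ * t⁻¹)) := by
    rw [hvinv, hta2]
    calc t ^ (-a) ≤ t ^ (a - 2) := hle
      _ ≤ a * t ^ (a - 2) := le_mul_of_one_le_left (Real.rpow_pos_of_pos ht0 _).le ha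
  have step2 : v + v⁻¹ ≤ (t + t⁻¹) ^ a := by
    rw [expand]
    calc v + v⁻¹ ≤ v + a * (v * (t⁻¹ * t⁻¹)) := by linarith
      _ = v * (1 + a * (t⁻¹ * t⁻¹)) := by ring
      _ ≤ v * (1 + t⁻¹ * t⁻¹) ^ a := by
          exact mul_le_mul_of_nonneg_left bern hv0.le
  calc lam' ^ ((1:ℝ)/2) + lam' ^ (-(1:ℝ)/2) ≤ v + v⁻¹ := step1
    _ ≤ (t + t⁻¹) ^ a := step2
    _ = (lam ^ ((1:ℝ)/2) + lam ^ (-(1:ℝ)/2)) ^ a := by rw [e2]
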